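/- For each integer k ≥ 1, let w_k = x₀x₁⋯x_{k−1}·x_k²·x_{k+1}⁻¹x_k⁻¹x_{k−1}⁻¹⋯x₁⁻¹x₀⁻¹ ∈ F(2). Then the homeomorphism ρ(w_k) of ℝ fixes every point t with t ≤ 0 or t ≥ 1 (all its breakpoints lie in the square [0,1]×[0,1]), yet the word length of w_k grows linearly: |w_k|₂ ≥ k. -/

import Mathlib

open scoped BigOperators

/-- Relators of Thompson's group `F(p)`: `x_i⁻¹ x_j x_i x_{j+p-1}⁻¹` for `i < j`. -/
def thompsonRels (p : ℕ) : Set (FreeGroup ℕ) :=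
  { rel | ∃ i j : ℕ, i < j ∧
      rel = (FreeGroup.of i)⁻¹ * FreeGroup.of j * FreeGroup.of i *
        (FreeGroup.of (j + p - 1))⁻¹ }

/-- Thompson's group `F(p)`, presented with generators `x_i` (`i : ℕ`) and relations
`x_i⁻¹ · x_j · x_i = x_{j+p-1}` for `i < j`. -/
def FP (p : ℕ) : Type := PresentedGroup (thompsonRels p)

instance (p : ℕ) : Group (FP p) :=
  inferInstanceAs (Group (PresentedGroup (thompsonRels p)))

/-- The generator `x_i` of `F(p)`. -/
def xg (p : ℕ) (i : ℕ) : FP p := PresentedGroup.of (rels := thompsonRels p) i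

/-- Word length of `x : G` with respect to a set `S` of generators: the least length of a
word in elements of `S ∪ S⁻¹` whose product is `x`. -/
noncomputable def wordLength {G : Type*} [Group G] (S : Set G) (x : G) : ℕ :=
  sInf { n : ℕ | ∃ w : List G, w.length = n ∧ (∀ g ∈ w, g ∈ S ∨ g⁻¹ ∈ S) ∧ w.prod = x }

/-- The word length `|x|_p` on `F(p)`, with respect to the generators `x_0, …, x_{p-1}`. -/
noncomputable def wlen (p : ℕ) (x : FP p) : ℕ :=
  wordLength { g : FP p | ∃ i, i < p ∧ g = xg p i } x

/-- The data of a candidate normal form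
`x_{i₁}^{r₁} ⋯ x_{iₙ}^{rₙ} · x_{jₘ}^{-sₘ} ⋯ x_{j₁}^{-s₁}` in `F(p)`. -/
structure NFData (p : ℕ) where
  n : ℕ
  m : ℕ
  i : Fin n → ℕ
  r : Fin n → ℕ
  j : Fin m → ℕ
  s : Fin m → ℕ

namespace NFData

variable {p : ℕ}

/-- The element of `F(p)` represented by the normal form data, namely
`x_{i₁}^{r₁} ⋯ x_{iₙ}^{rₙ} · (x_{j₁}^{s₁} ⋯ x_{jₘ}^{sₘ})⁻¹`. -/
def elem (d : NFData p) : FP p :=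
  (List.ofFn fun k => xg p (d.i k) ^ d.r k).prod *
    ((List.ofFn fun l => xg p (d.j l) ^ d.s l).prod)⁻¹

/-- The generator with index `a` occurs in `d` (with positive or negative exponent). -/
def Occurs (d : NFData p) (a : ℕ) : Prop :=
  (∃ k, d.i k = a) ∨ (∃ l, d.j l = a)

/-- `d` is a normal form of `x ∈ F(p)`: the indices are strictly increasing, the exponents
are at least `1`, `iₙ ≠ jₘ` when both parts are nonempty, whenever a generator and its
inverse both occur one of the following `p-1` generators (or its inverse) occurs as well,
and the corresponding product equals `x`. -/
def IsNormalFormOf (d : NFData p) (x : FP p) : Prop :=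
  StrictMono d.i ∧ StrictMono d.j ∧
    (∀ k, 1 ≤ d.r k) ∧ (∀ l, 1 ≤ d.s l) ∧
    (∀ (hn : 0 < d.n) (hm : 0 < d.m),
      d.i ⟨d.n - 1, Nat.sub_lt hn Nat.one_pos⟩ ≠ d.j ⟨d.m - 1, Nat.sub_lt hm Nat.one_pos⟩) ∧
    (∀ a : ℕ, (∃ k, d.i k = a) → (∃ l, d.j l = a) →
      ∃ b : ℕ, a < b ∧ b ≤ a + p - 1 ∧ d.Occurs b) ∧
    x = d.elem

/-- The quantity `D(x) = r₁ + ⋯ + rₙ + s₁ + ⋯ + sₘ + iₙ + jₘ` (the terms `iₙ`, `jₘ` being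
omitted when `n = 0`, resp. `m = 0`). -/
def D (d : NFData p) : ℕ :=
  (∑ k, d.r k) + (∑ l, d.s l) +
    (if hn : 0 < d.n then d.i ⟨d.n - 1, Nat.sub_lt hn Nat.one_pos⟩ else 0) +
    (if hm : 0 < d.m then d.j ⟨d.m - 1, Nat.sub_lt hm Nat.one_pos⟩ else 0)

end NFData

/-- The tail sum `r_k + r_{k+1} + ⋯ + r_n`. -/
def tailSum {n : ℕ} (r : Fin n → ℕ) (k : Fin n) : ℕ :=
  ∑ l ∈ Finset.univ.filter (fun l => k ≤ l), r l
/-- `N(x)` associated to a normal form in `F(2)` (Theorem 3):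
the maximum of `i_k + r_k + ⋯ + r_n + 1` and `j_l + s_l + ⋯ + s_m + 1`. -/
def NFData.N2 (d : NFData 2) : ℕ :=
  max (Finset.univ.sup fun k => d.i k + tailSum d.r k + 1)
      (Finset.univ.sup fun l => d.j l + tailSum d.s l + 1)

/-- `N(x)` associated to a normal form in `F(p)` (Theorem 6):
the maximum of `⌊i_k/(p-1)⌋ + r_k + ⋯ + r_n + 1` and `⌊j_l/(p-1)⌋ + s_l + ⋯ + s_m + 1`. -/
def NFData.Ngen {p : ℕ} (d : NFData p) : ℕ :=
  max (Finset.univ.sup fun k => d.i k / (p - 1) + tailSum d.r k + 1)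
      (Finset.univ.sup fun l => d.j l / (p - 1) + tailSum d.s l + 1)

/-- `N(x) = max { i_k + r_k + ⋯ + r_n + 1 }` for a positive word (Proposition 2). -/
def posN {n : ℕ} (i r : Fin n → ℕ) : ℕ :=
  Finset.univ.sup fun k => i k + tailSum r k + 1

/-- `N₁(x) = max { ⌊i_k/(p-1)⌋ + r_k + ⋯ + r_n + 1 }` (Proposition 4). -/
def posN1 (p : ℕ) {n : ℕ} (i r : Fin n → ℕ) : ℕ :=
  Finset.univ.sup fun k => i k / (p - 1) + tailSum r k + 1

/-- `N₂(x) = max { i_k + (p-1)(r_k + ⋯ + r_n) + 1 }` (Proposition 5). -/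
def posN2 (p : ℕ) {n : ℕ} (i r : Fin n → ℕ) : ℕ :=
  Finset.univ.sup fun k => i k + (p - 1) * tailSum r k + 1

/-- `x ∈ ℤ[1/p]`. -/
def IsPAdicRational (p : ℕ) (x : ℝ) : Prop :=
  ∃ (a : ℤ) (n : ℕ), x = (a : ℝ) / (p : ℝ) ^ n

/-- Thompson's group `F(p)` realized as a set of permutations of `ℝ`: orientation-preserving
piecewise-linear homeomorphisms of `[0,1]` (extended by the identity outside `[0,1]`) with
finitely many breakpoints, all in `ℤ[1/p]`, whose slopes are integer powers of `p`. -/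
def PLSet (p : ℕ) : Set (Equiv.Perm ℝ) :=
  { f | Monotone f ∧ (∀ t : ℝ, t ≤ 0 → f t = t) ∧ (∀ t : ℝ, 1 ≤ t → f t = t) ∧
    ∃ B : Finset ℝ, (∀ b ∈ B, IsPAdicRational p b) ∧
      ∀ t : ℝ, t ∉ (B : Set ℝ) →
        ∃ ε > (0 : ℝ), ∃ (k : ℤ) (c : ℝ), ∀ s : ℝ, |s - t| < ε → f s = (p : ℝ) ^ k * s + c }

/-- The map `Φ_p` on homeomorphisms: `(Φ_p f)(t) = t` for `t ≤ 1 - 1/p`, and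
`(Φ_p f)(t) = ((p-1) + f(pt - (p-1)))/p` for `t ≥ 1 - 1/p`. -/
noncomputable def PhiMap (p : ℕ) (f : ℝ → ℝ) : ℝ → ℝ := fun t =>
  if t ≤ 1 - 1 / (p : ℝ) then t
  else (((p : ℝ) - 1) + f ((p : ℝ) * t - ((p : ℝ) - 1))) / (p : ℝ)

/-- The piecewise-linear homeomorphism `f_i` of `ℝ` corresponding to the generator `x_i`
of `F(p)`. -/
noncomputable def fgen (p : ℕ) (i : ℕ) : ℝ → ℝ := fun t =>
  if t ≤ (i : ℝ) then t
  else if t ≤ (i : ℝ) + 1 then (p : ℝ) * t + (i : ℝ) * (1 - (p : ℝ))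
  else t + (p : ℝ) - 1
/-- The elements `w_k = x₀x₁⋯x_{k-1}·x_k²·x_{k+1}⁻¹x_k⁻¹⋯x₁⁻¹x₀⁻¹` of
`F(2)` act on `ℝ` fixing every `t ≤ 0` and every `t ≥ 1` (all breakpoints lie in
`[0,1] × [0,1]`), yet their word length grows linearly: `|w_k|₂ ≥ k`. -/
-- ===== auxiliary development =====

lemma st18_fgen_left (i : ℕ) (t : ℝ) (h : t ≤ i) : fgen 2 i t = t := by
  unfold fgen; rw [if_pos h]

lemma st18_fgen_mid (i : ℕ) (t : ℝ) (h1 : (i:ℝ) ≤ t) (h2 : t ≤ (i:ℝ) + 1) :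
    fgen 2 i t = 2 * t - i := by
  unfold fgen
  split_ifs with ha
  · push_cast; linarith [le_antisymm ha h1]
  · push_cast; ring

lemma st18_fgen_right (i : ℕ) (t : ℝ) (h : (i:ℝ) + 1 ≤ t) : fgen 2 i t = t + 1 := by
  unfold fgen
  split_ifs with ha hb
  · linarith
  · push_cast; linarith [le_antisymm hb h]
  · push_cast; ring

noncomputable def st18ginv (i : ℕ) : ℝ → ℝ := fun t =>
  if t ≤ (i : ℝ) then t else if t ≤ (i : ℝ) + 2 then (t + i) / 2 else t - 1

lemma st18_fgen_ginv (i : ℕ) (t : ℝ) : fgen 2 i (st18ginv i t) = t := by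
  unfold st18ginv
  split_ifs with h1 h2
  · rw [st18_fgen_left _ _ h1]
  · rw [st18_fgen_mid i _ (by linarith) (by linarith)]; ring
  · rw [st18_fgen_right i _ (by linarith)]; ring

lemma st18_ginv_fgen (i : ℕ) (t : ℝ) : st18ginv i (fgen 2 i t) = t := by
  rcases le_or_gt t i with h | h
  · rw [st18_fgen_left _ _ h]; unfold st18ginv; rw [if_pos h]
  · rcases le_or_gt t ((i:ℝ)+1) with h2 | h2
    · rw [st18_fgen_mid i t h.le h2]; unfold st18ginv
      rw [if_neg (by push_neg; linarith), if_pos (by linarith)]; ring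
    · rw [st18_fgen_right i t (by linarith)]; unfold st18ginv
      rw [if_neg (by push_neg; linarith), if_neg (by push_neg; linarith)]; ring

lemma st18_fgen_inj (i : ℕ) : Function.Injective (fgen 2 i) :=
  Function.LeftInverse.injective (g := st18ginv i) (st18_ginv_fgen i)

def st18Dyad (d : ℕ) : Set ℝ := {t | ∃ a : ℤ, t = (a : ℝ) / 2 ^ d}

lemma st18Dyad_mono {d e : ℕ} (h : d ≤ e) : st18Dyad d ⊆ st18Dyad e := by
  rintro t ⟨a, rfl⟩
  refine ⟨a * 2 ^ (e - d), ?_⟩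
  have h2 : (2:ℝ) ^ e = 2 ^ d * 2 ^ (e - d) := by
    rw [← pow_add]; congr 1; omega
  push_cast
  rw [h2]
  field_simp

lemma st18_int_mem_Dyad (a : ℤ) (d : ℕ) : (a : ℝ) ∈ st18Dyad d :=
  st18Dyad_mono (Nat.zero_le d) ⟨a, by norm_num⟩

lemma st18_nat_mem_Dyad (i : ℕ) (d : ℕ) : (i : ℝ) ∈ st18Dyad d := by
  exact_mod_cast st18_int_mem_Dyad i d

lemma st18_fgen_mem_Dyad {i d : ℕ} {t : ℝ} (h : t ∈ st18Dyad d) : fgen 2 i t ∈ st18Dyad d := by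
  obtain ⟨a, rfl⟩ := h
  have h2 : (0:ℝ) < 2 ^ d := by positivity
  rcases le_or_gt ((a:ℝ)/2^d) i with hc | hc
  · rw [st18_fgen_left i _ hc]; exact ⟨a, rfl⟩
  · rcases le_or_gt ((a:ℝ)/2^d) ((i:ℝ)+1) with hc2 | hc2
    · rw [st18_fgen_mid i _ hc.le hc2]
      refine ⟨2 * a - i * 2 ^ d, ?_⟩; push_cast; field_simp; try ring
    · rw [st18_fgen_right i _ hc2.le]
      refine ⟨a + 2 ^ d, ?_⟩; push_cast; field_simp; try ring

lemma st18_ginv_mem_Dyad {i d : ℕ} {t : ℝ} (h : t ∈ st18Dyad d) :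
    st18ginv i t ∈ st18Dyad (d + 1) := by
  obtain ⟨a, rfl⟩ := h
  have h2 : (0:ℝ) < 2 ^ d := by positivity
  unfold st18ginv
  split_ifs with h1 h2'
  · exact st18Dyad_mono (Nat.le_succ d) ⟨a, rfl⟩
  · refine ⟨a + i * 2 ^ d, ?_⟩; push_cast; rw [pow_succ]; field_simp
  · refine ⟨2 * a - 2 * 2 ^ d, ?_⟩; push_cast; rw [pow_succ]; field_simp

def st18LocAff (F : ℝ → ℝ) (t : ℝ) : Prop :=
  ∃ ε > (0:ℝ), ∃ m c : ℝ, ∀ s, |s - t| < ε → F s = m * s + c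

lemma st18LocAff.comp {F G : ℝ → ℝ} {t : ℝ} (hF : st18LocAff F t) (hG : st18LocAff G (F t)) :
    st18LocAff (fun s => G (F s)) t := by
  obtain ⟨ε₁, hε₁, m₁, c₁, hf⟩ := hF
  obtain ⟨ε₂, hε₂, m₂, c₂, hg⟩ := hG
  refine ⟨min ε₁ (ε₂ / (|m₁| + 1)), by positivity, m₂ * m₁, m₂ * c₁ + c₂, fun s hs => ?_⟩
  have hs1 : |s - t| < ε₁ := lt_of_lt_of_le hs (min_le_left _ _)
  have hs2 : |s - t| < ε₂ / (|m₁| + 1) := lt_of_lt_of_le hs (min_le_right _ _)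
  have hFs : F s = m₁ * s + c₁ := hf s hs1
  have hFt : F t = m₁ * t + c₁ := hf t (by simpa using hε₁)
  have hd : |F s - F t| < ε₂ := by
    rw [hFs, hFt]
    have he : m₁ * s + c₁ - (m₁ * t + c₁) = m₁ * (s - t) := by ring
    rw [he, abs_mul]
    calc |m₁| * |s - t| ≤ |m₁| * (ε₂ / (|m₁| + 1)) := by
          apply mul_le_mul_of_nonneg_left hs2.le (abs_nonneg _)
      _ < (|m₁| + 1) * (ε₂ / (|m₁| + 1)) := by
          apply mul_lt_mul_of_pos_right (by linarith) (by positivity)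
      _ = ε₂ := by field_simp; try ring
  show G (F s) = _
  rw [hg (F s) hd, hFs]; ring

lemma st18_locAff_fgen {i : ℕ} {t : ℝ} (h : t ∉ st18Dyad 0) : st18LocAff (fgen 2 i) t := by
  have hi : t ≠ (i:ℝ) := fun he => h (he ▸ st18_nat_mem_Dyad i 0)
  have hi1 : t ≠ (i:ℝ) + 1 := fun he => h (by
    rw [he]
    exact_mod_cast st18_int_mem_Dyad ((i:ℤ)+1) 0)
  rcases lt_trichotomy t ((i:ℝ)) with h1 | h1 | h1
  · exact ⟨(i:ℝ) - t, by linarith, 1, 0, fun s hs => by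
      rw [abs_lt] at hs
      rw [st18_fgen_left i s (by linarith [hs.1, hs.2])]; ring⟩
  · exact absurd h1 hi
  · rcases lt_trichotomy t ((i:ℝ)+1) with h2 | h2 | h2
    · refine ⟨min (t - i) ((i:ℝ)+1-t), lt_min (by linarith) (by linarith), 2, -(i:ℝ),
        fun s hs => ?_⟩
      rw [abs_lt] at hs
      have l1 := min_le_left (t - (i:ℝ)) ((i:ℝ)+1-t)
      have l2 := min_le_right (t - (i:ℝ)) ((i:ℝ)+1-t)
      rw [st18_fgen_mid i s (by linarith [hs.1, hs.2]) (by linarith [hs.1, hs.2])]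
      ring
    · exact absurd h2 hi1
    · exact ⟨t - ((i:ℝ)+1), by linarith, 1, 1, fun s hs => by
        rw [abs_lt] at hs
        rw [st18_fgen_right i s (by linarith [hs.1])]; ring⟩

lemma st18_locAff_ginv {i : ℕ} {t : ℝ} (h : t ∉ st18Dyad 0) : st18LocAff (st18ginv i) t := by
  have hi : t ≠ (i:ℝ) := fun he => h (he ▸ st18_nat_mem_Dyad i 0)
  have hi2 : t ≠ (i:ℝ) + 2 := fun he => h (by
    rw [he]; exact_mod_cast st18_int_mem_Dyad ((i:ℤ)+2) 0)
  rcases lt_trichotomy t ((i:ℝ)) with h1 | h1 | h1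
  · refine ⟨(i:ℝ) - t, by linarith, 1, 0, fun s hs => ?_⟩
    rw [abs_lt] at hs
    unfold st18ginv; rw [if_pos (by linarith [hs.1, hs.2] : s ≤ (i:ℝ))]; ring
  · exact absurd h1 hi
  · rcases lt_trichotomy t ((i:ℝ)+2) with h2 | h2 | h2
    · refine ⟨min (t - i) ((i:ℝ)+2-t), lt_min (by linarith) (by linarith), 1/2, (i:ℝ)/2,
        fun s hs => ?_⟩
      rw [abs_lt] at hs
      have l1 := min_le_left (t - (i:ℝ)) ((i:ℝ)+2-t)
      have l2 := min_le_right (t - (i:ℝ)) ((i:ℝ)+2-t)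
      unfold st18ginv
      rw [if_neg (by push_neg; linarith [hs.1, hs.2]), if_pos (by linarith [hs.1, hs.2])]
      ring
    · exact absurd h2 hi2
    · refine ⟨t - ((i:ℝ)+2), by linarith, 1, -1, fun s hs => ?_⟩
      rw [abs_lt] at hs
      unfold st18ginv
      rw [if_neg (by push_neg; linarith [hs.1]), if_neg (by push_neg; linarith [hs.1])]
      ring

lemma st18_xg_rel (p : ℕ) {i j : ℕ} (h : i < j) :
    (xg p i)⁻¹ * xg p j * xg p i = xg p (j + p - 1) := by
  have hmem : ((FreeGroup.of i)⁻¹ * FreeGroup.of j * FreeGroup.of i *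
      (FreeGroup.of (j + p - 1))⁻¹ : FreeGroup ℕ) ∈
      Subgroup.normalClosure (thompsonRels p) :=
    Subgroup.subset_normalClosure ⟨i, j, h, rfl⟩
  have h1 : (PresentedGroup.mk (thompsonRels p))
      ((FreeGroup.of i)⁻¹ * FreeGroup.of j * FreeGroup.of i *
        (FreeGroup.of (j + p - 1))⁻¹) = 1 := (QuotientGroup.eq_one_iff _).mpr hmem
  simp only [map_mul, map_inv] at h1
  have h2 : ∀ a, xg p a = (PresentedGroup.mk (thompsonRels p)) (FreeGroup.of a) :=
    fun a => rfl
  rw [← mul_inv_eq_one]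
  exact h1

lemma st18_xg_mem_closure (j : ℕ) :
    xg 2 j ∈ Subgroup.closure { g : FP 2 | ∃ i, i < 2 ∧ g = xg 2 i } := by
  induction j using Nat.strong_induction_on with
  | _ j ih =>
    match j, ih with
    | 0, _ => exact Subgroup.subset_closure ⟨0, by norm_num, rfl⟩
    | 1, _ => exact Subgroup.subset_closure ⟨1, by norm_num, rfl⟩
    | (n+2), ih =>
      have hr := st18_xg_rel 2 (show 0 < n + 1 by omega)
      have he : (n + 1) + 2 - 1 = n + 2 := by omega
      rw [he] at hr
      rw [← hr]
      exact mul_mem (mul_mem (inv_mem (ih 0 (by omega))) (ih (n+1) (by omega)))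
        (ih 0 (by omega))

noncomputable def st18Lw (m : ℕ) : FP 2 := (List.ofFn fun t : Fin m => xg 2 t).prod

lemma st18Lw_succ (m : ℕ) : st18Lw (m+1) = st18Lw m * xg 2 m := by
  unfold st18Lw
  rw [List.ofFn_succ']
  rw [List.concat_eq_append, List.prod_append]
  simp [Fin.coe_castSucc]

section rho

variable (ρ : FP 2 → ℝ → ℝ)
  (hρmul : ∀ a b : FP 2, ρ (a * b) = ρ b ∘ ρ a)
  (hρgen : ∀ j : ℕ, ρ (xg 2 j) = fgen 2 j)
include hρmul hρgen

lemma st18_rho_one : ∀ t, ρ 1 t = t := by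
  intro t
  have h := hρmul 1 (xg 2 0)
  rw [one_mul, hρgen] at h
  have h2 : fgen 2 0 t = fgen 2 0 (ρ 1 t) := by
    conv_lhs => rw [h]
    rfl
  calc ρ 1 t = st18ginv 0 (fgen 2 0 (ρ 1 t)) := (st18_ginv_fgen 0 _).symm
    _ = st18ginv 0 (fgen 2 0 t) := by rw [← h2]
    _ = t := st18_ginv_fgen 0 t

lemma st18_rho_leftinv : ∀ a : FP 2, ∀ t, ρ a⁻¹ (ρ a t) = t := by
  intro a t
  have h := hρmul a a⁻¹
  rw [mul_inv_cancel] at h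
  have h2 : ρ 1 t = ρ a⁻¹ (ρ a t) := by rw [h]; rfl
  rw [← h2, st18_rho_one ρ hρmul hρgen]

lemma st18_rho_inj (a : FP 2) : Function.Injective (ρ a) :=
  Function.LeftInverse.injective (g := ρ a⁻¹) (st18_rho_leftinv ρ hρmul hρgen a)

lemma st18_rho_inv_gen (i : ℕ) : ∀ t, ρ (xg 2 i)⁻¹ t = st18ginv i t := by
  intro t
  have h := hρmul (xg 2 i)⁻¹ (xg 2 i)
  rw [inv_mul_cancel, hρgen] at h
  have h2 : fgen 2 i (ρ (xg 2 i)⁻¹ t) = t := by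
    have h3 : ρ (1 : FP 2) t = fgen 2 i (ρ (xg 2 i)⁻¹ t) := by rw [h]; rfl
    rw [← h3, st18_rho_one ρ hρmul hρgen]
  calc ρ (xg 2 i)⁻¹ t = st18ginv i (fgen 2 i (ρ (xg 2 i)⁻¹ t)) := (st18_ginv_fgen i _).symm
    _ = st18ginv i t := by rw [h2]

lemma st18_rho_Lw_succ (m : ℕ) (t : ℝ) :
    ρ (st18Lw (m+1)) t = fgen 2 m (ρ (st18Lw m) t) := by
  rw [st18Lw_succ, hρmul, ← hρgen m]; rfl

lemma st18_chainA (m : ℕ) (t : ℝ) (h : t ≤ 0) : ρ (st18Lw m) t = t := by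
  induction m with
  | zero => exact st18_rho_one ρ hρmul hρgen t
  | succ m ih =>
    rw [st18_rho_Lw_succ ρ hρmul hρgen, ih,
      st18_fgen_left m t (by exact_mod_cast h.trans (by positivity))]

lemma st18_chainB (m : ℕ) (t : ℝ) (h : 1 ≤ t) : ρ (st18Lw m) t = t + m := by
  induction m with
  | zero => simpa [st18Lw] using st18_rho_one ρ hρmul hρgen t
  | succ m ih =>
    rw [st18_rho_Lw_succ ρ hρmul hρgen, ih,
      st18_fgen_right m (t + m) (by push_cast; linarith)]
    push_cast; ring

lemma st18_chainC (m : ℕ) (t : ℝ) (h1 : t ≤ 1) (h2 : -1 ≤ 2 ^ m * (t - 1)) :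
    ρ (st18Lw m) t = 2 ^ m * (t - 1) + m + 1 := by
  induction m with
  | zero => simpa [st18Lw] using st18_rho_one ρ hρmul hρgen t
  | succ m ih =>
    have hm : (2:ℝ) ^ (m+1) = 2 * 2 ^ m := by rw [pow_succ]; ring
    have ht1 : t - 1 ≤ 0 := by linarith
    have hmono : -1 ≤ 2 ^ m * (t - 1) := by nlinarith [pow_pos (by norm_num : (0:ℝ) < 2) m]
    have hhalf : -(1/2 : ℝ) ≤ 2 ^ m * (t - 1) := by
      rw [hm] at h2; linarith
    rw [st18_rho_Lw_succ ρ hρmul hρgen, ih hmono]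
    rw [st18_fgen_mid m _ (by push_cast; nlinarith [pow_pos (by norm_num : (0:ℝ) < 2) m])
      (by push_cast; nlinarith [pow_pos (by norm_num : (0:ℝ) < 2) m])]
    push_cast; rw [hm]; ring

lemma st18_word_locAff : ∀ l : List (FP 2),
    (∀ g ∈ l, g ∈ { g : FP 2 | ∃ i, i < 2 ∧ g = xg 2 i } ∨
      g⁻¹ ∈ { g : FP 2 | ∃ i, i < 2 ∧ g = xg 2 i }) →
    ∀ t : ℝ, t ∉ st18Dyad l.length → st18LocAff (ρ l.prod) t := by
  intro l
  induction l with
  | nil =>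
    intro _ t _
    refine ⟨1, one_pos, 1, 0, fun s _ => ?_⟩
    rw [List.prod_nil, st18_rho_one ρ hρmul hρgen s]; ring
  | cons a l ih =>
    intro hg t ht
    simp only [List.length_cons] at ht
    have hga := hg a List.mem_cons_self
    have hgl : ∀ g ∈ l, g ∈ { g : FP 2 | ∃ i, i < 2 ∧ g = xg 2 i } ∨
        g⁻¹ ∈ { g : FP 2 | ∃ i, i < 2 ∧ g = xg 2 i } :=
      fun g hgm => hg g (List.mem_cons_of_mem a hgm)
    have h0 : t ∉ st18Dyad 0 := fun hmem => ht (st18Dyad_mono (Nat.zero_le _) hmem)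
    rw [List.prod_cons, hρmul a l.prod]
    rcases hga with ⟨i, _, rfl⟩ | ⟨i, _, hinv⟩
    · rw [hρgen i]
      have hnext : fgen 2 i t ∉ st18Dyad l.length := fun hmem => by
        have hmem2 : t ∈ st18Dyad (l.length + 1) := by
          have h3 := st18_ginv_mem_Dyad (i := i) hmem
          rwa [st18_ginv_fgen] at h3
        exact ht hmem2
      exact st18LocAff.comp (F := fgen 2 i) (G := ρ l.prod) (st18_locAff_fgen h0) (ih hgl _ hnext)
    · have hgeq : a = (xg 2 i)⁻¹ := by rw [← hinv, inv_inv]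
      have hfun : ρ a = st18ginv i := by
        funext s; rw [hgeq]; exact st18_rho_inv_gen ρ hρmul hρgen i s
      rw [hfun]
      have hnext : st18ginv i t ∉ st18Dyad l.length := fun hmem => by
        have hmem2 : t ∈ st18Dyad (l.length + 1) := by
          have h3 := st18_fgen_mem_Dyad (i := i) hmem
          rw [st18_fgen_ginv] at h3
          exact st18Dyad_mono (Nat.le_succ _) h3
        exact ht hmem2
      exact st18LocAff.comp (F := st18ginv i) (G := ρ l.prod) (st18_locAff_ginv h0) (ih hgl _ hnext)

end rho

lemma st18_tstar_not_dyad (k n : ℕ) (hn : n ≤ k) :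
    ((1:ℝ) - (1/2)/2^k) ∉ st18Dyad n := by
  rintro ⟨a, ha⟩
  have hk0 : (0:ℝ) < 2^k := by positivity
  have hn0 : (0:ℝ) < 2^n := by positivity
  have e : ((1:ℝ) - (1/2)/2^k) * (2^n * (2*2^k)) = ((a:ℝ)/2^n) * (2^n*(2*2^k)) := by
    rw [← ha]
  have eL : ((1:ℝ) - (1/2)/2^k) * (2^n*(2*2^k)) = 2^n*(2*2^k) - 2^n := by
    field_simp
  have eR : ((a:ℝ)/2^n) * (2^n*(2*2^k)) = a*(2*2^k) := by
    field_simp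
  have hreal : (a:ℝ)*(2*2^k) = 2^n*(2*2^k) - 2^n := by rw [← eR, ← e, eL]
  have hz : (a:ℤ)*(2*2^k) = 2^n*(2*2^k) - 2^n := by exact_mod_cast hreal
  have hsplit : (2:ℤ)^k = 2^n * 2^(k-n) := by rw [← pow_add]; congr 1; omega
  have h2n : (2:ℤ)^n ≠ 0 := by positivity
  have hcancel : (a:ℤ) * (2 * 2^(k-n)) = 2 * (2^n * 2^(k-n)) - 1 := by
    apply mul_right_cancel₀ h2n
    rw [hsplit] at hz
    linear_combination hz
  set X := (2:ℤ)^(k-n) with hX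
  set Y := (2:ℤ)^n with hY
  have hb : 2*(a*X) = 2*(Y*X) - 1 := by linear_combination hcancel
  omega

lemma st18_le_one_aux {E x c : ℝ} (hE : 0 < E) (hc : 0 < c) (h : E * (x - 1) ≤ -c) : x ≤ 1 := by
  by_contra h1
  push_neg at h1
  have h2 := mul_pos hE (by linarith : (0:ℝ) < x - 1)
  linarith

theorem statement18 (k : ℕ) (hk : 1 ≤ k) (w : FP 2)
    (hw : w = (List.ofFn fun t : Fin k => xg 2 t).prod * xg 2 k ^ 2 * (xg 2 (k + 1))⁻¹ *
      ((List.ofFn fun t : Fin (k + 1) => xg 2 t).prod)⁻¹)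
    (ρ : FP 2 → ℝ → ℝ)
    (hρmul : ∀ a b : FP 2, ρ (a * b) = ρ b ∘ ρ a)
    (hρgen : ∀ j : ℕ, ρ (xg 2 j) = fgen 2 j) :
    (∀ t : ℝ, t ≤ 0 → ρ w t = t) ∧ (∀ t : ℝ, 1 ≤ t → ρ w t = t) ∧ k ≤ wlen 2 w := by
  have hE0 : (0:ℝ) < 2^k := by positivity
  have hw' : w = st18Lw k * xg 2 k ^ 2 * (xg 2 (k+1))⁻¹ * (st18Lw (k+1))⁻¹ := hw
  have hP : w * st18Lw (k+1) * xg 2 (k+1) = st18Lw k * xg 2 k * xg 2 k := by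
    rw [hw', pow_two]; group
  have hstar : ∀ t, fgen 2 (k+1) (ρ (st18Lw (k+1)) (ρ w t)) =
      fgen 2 k (fgen 2 k (ρ (st18Lw k) t)) := by
    intro t
    have e1 : ρ (w * st18Lw (k+1) * xg 2 (k+1)) t
        = fgen 2 (k+1) (ρ (st18Lw (k+1)) (ρ w t)) := by
      rw [hρmul (w * st18Lw (k+1)) (xg 2 (k+1)), hρmul w (st18Lw (k+1)), hρgen]; rfl
    have e2 : ρ (st18Lw k * xg 2 k * xg 2 k) t = fgen 2 k (fgen 2 k (ρ (st18Lw k) t)) := by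
      rw [hρmul (st18Lw k * xg 2 k) (xg 2 k), hρmul (st18Lw k) (xg 2 k), hρgen]; rfl
    rw [← e1, ← e2, hP]
  have hkey : ∀ u v : ℝ, fgen 2 (k+1) (ρ (st18Lw (k+1)) u) =
      fgen 2 (k+1) (ρ (st18Lw (k+1)) v) → u = v :=
    fun u v h => st18_rho_inj ρ hρmul hρgen (st18Lw (k+1)) (st18_fgen_inj (k+1) h)
  refine ⟨?_, ?_, ?_⟩
  · -- t ≤ 0
    intro t ht
    apply hkey
    rw [hstar t]
    have hk0 : (0:ℝ) ≤ (k:ℝ) := Nat.cast_nonneg k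
    rw [st18_chainA ρ hρmul hρgen k t ht, st18_chainA ρ hρmul hρgen (k+1) t ht]
    rw [st18_fgen_left k t (by linarith), st18_fgen_left k t (by linarith),
       st18_fgen_left (k+1) t (by push_cast; linarith)]
  · -- 1 ≤ t
    intro t ht
    apply hkey
    rw [hstar t]
    rw [st18_chainB ρ hρmul hρgen k t ht, st18_chainB ρ hρmul hρgen (k+1) t ht]
    rw [st18_fgen_right k (t + k) (by push_cast; linarith),
        st18_fgen_right k (t + (k:ℝ) + 1) (by push_cast; linarith),
        st18_fgen_right (k+1) (t + ((k:ℕ)+1 : ℕ)) (by push_cast; linarith)]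
    push_cast; ring
  · -- word length
    have lleft : ∀ s : ℝ, -3/4 ≤ 2^k*(s-1) → 2^k*(s-1) ≤ -1/2 →
        ρ w s = s + (1/4)/2^k := by
      intro s hu1 hu2
      have hs1 : s ≤ 1 := st18_le_one_aux (c := 1/2) hE0 (by norm_num) (by linarith)
      apply hkey
      rw [hstar s]
      rw [st18_chainC ρ hρmul hρgen k s hs1 (by linarith)]
      rw [st18_fgen_mid k (2^k*(s-1) + (k:ℝ) + 1) (by push_cast; linarith)
        (by push_cast; linarith)]
      rw [show 2*(2^k*(s-1) + (k:ℝ) + 1) - (k:ℝ) = 2*(2^k*(s-1)) + (k:ℝ) + 2 from by ring]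
      rw [st18_fgen_mid k (2*(2^k*(s-1)) + (k:ℝ) + 2) (by push_cast; linarith)
        (by push_cast; linarith)]
      have hq4 : (2:ℝ)^k * ((1/4)/2^k) = 1/4 := by field_simp; try ring
      have hv1 : (2:ℝ)^(k+1) * ((s + (1/4)/2^k) - 1) = 2*(2^k*(s-1)) + 1/2 := by
        rw [pow_succ]; linear_combination 2 * hq4
      have hvle : s + (1/4)/2^k ≤ 1 :=
        st18_le_one_aux (E := (2:ℝ)^(k+1)) (c := 1/4) (by positivity) (by norm_num)
          (by rw [hv1]; linarith)
      rw [st18_chainC ρ hρmul hρgen (k+1) _ hvle (by rw [hv1]; linarith)]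
      rw [hv1]
      rw [st18_fgen_mid (k+1) (2*(2^k*(s-1)) + 1/2 + ((k:ℕ)+1 : ℕ) + 1)
        (by push_cast; linarith) (by push_cast; linarith)]
      push_cast; ring
    have lright : ∀ s : ℝ, -1/2 ≤ 2^k*(s-1) → 2^k*(s-1) ≤ -1/4 →
        ρ w s = (s+1)/2 := by
      intro s hu1 hu2
      have hs1 : s ≤ 1 := st18_le_one_aux (c := 1/4) hE0 (by norm_num) (by linarith)
      apply hkey
      rw [hstar s]
      rw [st18_chainC ρ hρmul hρgen k s hs1 (by linarith)]
      rw [st18_fgen_mid k (2^k*(s-1) + (k:ℝ) + 1) (by push_cast; linarith)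
        (by push_cast; linarith)]
      rw [show 2*(2^k*(s-1) + (k:ℝ) + 1) - (k:ℝ) = 2*(2^k*(s-1)) + (k:ℝ) + 2 from by ring]
      rw [st18_fgen_right k (2*(2^k*(s-1)) + (k:ℝ) + 2) (by push_cast; linarith)]
      have hv1 : (2:ℝ)^(k+1) * ((s+1)/2 - 1) = 2^k*(s-1) := by
        rw [pow_succ]; ring
      have hvle : (s+1)/2 ≤ 1 := by linarith
      rw [st18_chainC ρ hρmul hρgen (k+1) _ hvle (by rw [hv1]; linarith)]
      rw [hv1]
      rw [st18_fgen_mid (k+1) (2^k*(s-1) + ((k:ℕ)+1 : ℕ) + 1)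
        (by push_cast; linarith) (by push_cast; linarith)]
      push_cast; ring
    -- nonemptiness
    have hwcl : w ∈ Subgroup.closure { g : FP 2 | ∃ i, i < 2 ∧ g = xg 2 i } := by
      have hLmem : ∀ m : ℕ, st18Lw m ∈ Subgroup.closure { g : FP 2 | ∃ i, i < 2 ∧ g = xg 2 i } := by
        intro m
        apply Subgroup.list_prod_mem
        intro x hx
        rw [List.mem_ofFn] at hx
        obtain ⟨i, rfl⟩ := hx
        exact st18_xg_mem_closure i
      rw [hw']
      exact mul_mem (mul_mem (mul_mem (hLmem k) (pow_mem (st18_xg_mem_closure k) 2))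
        (inv_mem (st18_xg_mem_closure (k+1)))) (inv_mem (hLmem (k+1)))
    have hsub : w ∈ Submonoid.closure ({ g : FP 2 | ∃ i, i < 2 ∧ g = xg 2 i } ∪
        { g : FP 2 | ∃ i, i < 2 ∧ g = xg 2 i }⁻¹) := by
      rw [← Subgroup.closure_toSubmonoid]; exact hwcl
    obtain ⟨l, hl, hlp⟩ := Submonoid.exists_list_of_mem_closure hsub
    have hl' : ∀ g ∈ l, g ∈ { g : FP 2 | ∃ i, i < 2 ∧ g = xg 2 i } ∨
        g⁻¹ ∈ { g : FP 2 | ∃ i, i < 2 ∧ g = xg 2 i } := fun g hgm => by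
      rcases hl g hgm with h | h
      · exact Or.inl h
      · exact Or.inr (Set.mem_inv.mp h)
    show k ≤ wlen 2 w
    unfold wlen wordLength
    have hne : { n : ℕ | ∃ w' : List (FP 2), w'.length = n ∧
        (∀ g ∈ w', g ∈ { g : FP 2 | ∃ i, i < 2 ∧ g = xg 2 i } ∨
          g⁻¹ ∈ { g : FP 2 | ∃ i, i < 2 ∧ g = xg 2 i }) ∧ w'.prod = w }.Nonempty :=
      ⟨l.length, l, rfl, hl', hlp⟩
    obtain ⟨l₀, hlen, hgen0, hprod0⟩ := Nat.sInf_mem hne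
    rw [← hlen]
    by_contra hcon
    push_neg at hcon
    have hnd := st18_tstar_not_dyad k l₀.length (by omega)
    have haff : st18LocAff (ρ w) ((1:ℝ) - (1/2)/2^k) := by
      have h5 := st18_word_locAff ρ hρmul hρgen l₀ hgen0 _ hnd
      rwa [hprod0] at h5
    obtain ⟨ε, hε, m, c, haff'⟩ := haff
    have hδpos : 0 < min (ε/2) ((1/4)/2^k) := lt_min (by linarith) (by positivity)
    set δ := min (ε/2) ((1/4)/2^k) with hδdef
    have hδε : δ < ε := lt_of_le_of_lt (min_le_left _ _) (by linarith)
    have hδq : δ ≤ (1/4)/2^k := min_le_right _ _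
    have hq4 : (2:ℝ)^k * ((1/4)/2^k) = 1/4 := by field_simp; try ring
    have hq2 : (2:ℝ)^k * ((1/2)/2^k) = 1/2 := by field_simp; try ring
    have hEδ : 2^k * δ ≤ 1/4 := by
      have h6 := mul_le_mul_of_nonneg_left hδq hE0.le
      linarith
    have hEδ0 : 0 < 2^k * δ := mul_pos hE0 hδpos
    -- three evaluation points
    have hb1 : (2:ℝ)^k * ((((1:ℝ) - (1/2)/2^k) - δ) - 1) = -(1/2) - 2^k*δ := by
      linear_combination -hq2
    have hb2 : (2:ℝ)^k * (((1:ℝ) - (1/2)/2^k) - 1) = -(1/2) := by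
      linear_combination -hq2
    have hb3 : (2:ℝ)^k * ((((1:ℝ) - (1/2)/2^k) + δ) - 1) = -(1/2) + 2^k*δ := by
      linear_combination -hq2
    have heq1 : m * (((1:ℝ) - (1/2)/2^k) - δ) + c = (((1:ℝ) - (1/2)/2^k) - δ) + (1/4)/2^k := by
      have ha := haff' (((1:ℝ) - (1/2)/2^k) - δ) (by
        rw [show (((1:ℝ) - (1/2)/2^k) - δ) - ((1:ℝ) - (1/2)/2^k) = -δ from by ring,
          abs_neg, abs_of_pos hδpos]
        exact hδε)
      have hb := lleft (((1:ℝ) - (1/2)/2^k) - δ) (by rw [hb1]; linarith)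
        (by rw [hb1]; linarith)
      rw [← ha, hb]
    have heq2 : m * ((1:ℝ) - (1/2)/2^k) + c = (((1:ℝ) - (1/2)/2^k) + 1)/2 := by
      have ha := haff' ((1:ℝ) - (1/2)/2^k) (by simpa using hε)
      have hb := lright ((1:ℝ) - (1/2)/2^k) (by rw [hb2]; norm_num) (by rw [hb2]; norm_num)
      rw [← ha, hb]
    have heq3 : m * (((1:ℝ) - (1/2)/2^k) + δ) + c = ((((1:ℝ) - (1/2)/2^k) + δ) + 1)/2 := by
      have ha := haff' (((1:ℝ) - (1/2)/2^k) + δ) (by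
        rw [show (((1:ℝ) - (1/2)/2^k) + δ) - ((1:ℝ) - (1/2)/2^k) = δ from by ring,
          abs_of_pos hδpos]
        exact hδε)
      have hb := lright (((1:ℝ) - (1/2)/2^k) + δ) (by rw [hb3]; linarith)
        (by rw [hb3]; linarith)
      rw [← ha, hb]
    have d1 : m * δ = δ := by linear_combination heq2 - heq1
    have d2 : m * δ = δ/2 := by linear_combination heq3 - heq2
    linarith
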